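/- Let U, V ⊆ ℝ^e be open and H : U → V a bi-Lipschitz C¹ bijection, and let G : V → ℝ^n be C¹ with e ≤ n. Then for all x ∈ U, J_e(G ∘ H)(x) = J_e(G)(H(x)) · |det(DH(x))|, where J_e(F)(x) denotes the square root of the sum of squares of all e×e minors of the Jacobian matrix of F at x. -/

import Mathlib

open MeasureTheory Set ENNReal Matrix
noncomputable section

abbrev E (n : ℕ) := EuclideanSpace ℝ (Fin n)

/-- The Jacobian matrix of a map G : ℝ^e → ℝ^n at x, as an n × e matrix. -/
def jacMatrix {e n : ℕ} (G : E e → E n) (x : E e) : Matrix (Fin n) (Fin e) ℝ :=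
  fun i j => fderiv ℝ G x (EuclideanSpace.single j (1 : ℝ)) i

/-- J_e G(x): the square root of the sum of the squares of all e × e minors
of the Jacobian matrix of G at x. -/
def jacobian {e n : ℕ} (G : E e → E n) (x : E e) : ℝ :=
  Real.sqrt (∑ s : {s : Finset (Fin n) // s.card = e},
    (Matrix.det ((jacMatrix G x).submatrix (s.1.orderEmbOfFin s.2) id)) ^ 2)

theorem stmt11 (e n : ℕ) (hen : e ≤ n)
    (U V : Set (E e)) (hU : IsOpen U) (hV : IsOpen V)
    (H : E e → E e) (hHb : Set.BijOn H U V) (hHc : ContDiffOn ℝ 1 H U)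
    (hbiLip : ∃ c : ℝ, 0 < c ∧ ∀ x ∈ U, ∀ y ∈ U,
      (1 / c) * ‖x - y‖ ≤ ‖H x - H y‖ ∧ ‖H x - H y‖ ≤ c * ‖x - y‖)
    (G : E e → E n) (hG : ContDiffOn ℝ 1 G V) :
    ∀ x ∈ U, jacobian (G ∘ H) x =
      jacobian G (H x) * |Matrix.det (jacMatrix H x)| := by
  intro x hx
  have hxV : H x ∈ V := hHb.mapsTo hx
  have hHd : DifferentiableAt ℝ H x :=
    (hHc.contDiffAt (hU.mem_nhds hx)).differentiableAt one_ne_zero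
  have hGd : DifferentiableAt ℝ G (H x) :=
    (hG.contDiffAt (hV.mem_nhds hxV)).differentiableAt one_ne_zero
  have hcomp : jacMatrix (G ∘ H) x = jacMatrix G (H x) * jacMatrix H x := by
    have hf : fderiv ℝ (G ∘ H) x = (fderiv ℝ G (H x)).comp (fderiv ℝ H x) :=
      fderiv_comp x hGd hHd
    ext i j
    simp only [jacMatrix, hf, ContinuousLinearMap.coe_comp', Function.comp_apply,
      Matrix.mul_apply]
    set L := fderiv ℝ G (H x)
    set v := fderiv ℝ H x (EuclideanSpace.single j 1) with hv
    have hvsum : v = ∑ k, v k • EuclideanSpace.single k (1 : ℝ) := by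
      have := (EuclideanSpace.basisFun (Fin e) ℝ).sum_repr v
      simpa [EuclideanSpace.basisFun_apply, EuclideanSpace.basisFun_repr] using this.symm
    have hLv : L v = ∑ k, v k • L (EuclideanSpace.single k 1) := by
      conv_lhs => rw [hvsum]
      simp
    rw [hLv, show ((∑ k : Fin e, v k • L (EuclideanSpace.single k 1)) i)
        = EuclideanSpace.proj (𝕜 := ℝ) i (∑ k : Fin e, v k • L (EuclideanSpace.single k 1)) from rfl,
      map_sum]
    simp [mul_comm]
  unfold jacobian
  rw [hcomp]
  have hsub : ∀ s : {s : Finset (Fin n) // s.card = e},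
      ((jacMatrix G (H x) * jacMatrix H x).submatrix (s.1.orderEmbOfFin s.2) id)
      = ((jacMatrix G (H x)).submatrix (s.1.orderEmbOfFin s.2) id) * jacMatrix H x := by
    intro s; ext i j; simp [Matrix.mul_apply, Matrix.submatrix_apply]
  simp_rw [hsub, Matrix.det_mul, mul_pow, ← Finset.sum_mul]
  rw [Real.sqrt_mul (by positivity), Real.sqrt_sq_eq_abs]
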